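/- Let P = {1,…,N} and A_i ∈ ℝ^{d×d} for i ∈ P. Suppose for each i ∈ P there are a symmetric positive definite P_i and λ_i ∈ ℝ with ⟨P_i e^{A_i t} ξ, e^{A_i t} ξ⟩ ≤ e^{−λ_i t} ⟨P_i ξ, ξ⟩ for all ξ ∈ ℝ^d and t ≥ 0, and constants μ_{kℓ} > 0 with ⟨P_ℓ z, z⟩ ≤ μ_{kℓ} ⟨P_k z, z⟩ for all z ∈ ℝ^d and all pairs (k,ℓ) used below. Let 0 = τ_0 < τ_1 < ⋯ and s_n ∈ P define a switching signal, and let x be the solution of the switched system ẋ = A_{σ(t)} x. Then for every M ∈ ℕ and every t ∈ [τ_M, τ_{M+1}): ⟨P_{s_M} x(t), x(t)⟩ ≤ ⟨P_{s_0} x(0), x(0)⟩ · (∏_{n=0}^{M−1} μ_{s_n s_{n+1}}) · exp( −λ_{s_M}(t − τ_M) − Σ_{n=0}^{M−1} λ_{s_n}(τ_{n+1} − τ_n) ). -/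

import Mathlib

open scoped RealInnerProductSpace BigOperators

noncomputable def quadForm {d : ℕ} (P : Matrix (Fin d) (Fin d) ℝ)
    (ξ : EuclideanSpace ℝ (Fin d)) : ℝ :=
  ⟪Matrix.toEuclideanLin P ξ, ξ⟫

/-- `x` is a solution on `[0,∞)` of the switched linear system generated by the
family `A` and the switching signal with switching instants `τ` and index sequence `s`. -/
def IsSwitchedSolution {d N : ℕ} (A : Fin N → Matrix (Fin d) (Fin d) ℝ)
    (τ : ℕ → ℝ) (s : ℕ → Fin N) (x : ℝ → EuclideanSpace ℝ (Fin d)) : Prop :=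
  ContinuousOn x (Set.Ici 0) ∧
  ∀ n : ℕ, ∀ t ∈ Set.Ico (τ n) (τ (n + 1)),
    HasDerivWithinAt x (Matrix.toEuclideanLin (A (s n)) (x t)) (Set.Ico (τ n) (τ (n + 1))) t

lemma toEuclideanLin_mul_apply {d : ℕ} (A B : Matrix (Fin d) (Fin d) ℝ)
    (v : EuclideanSpace ℝ (Fin d)) :
    Matrix.toEuclideanLin (A * B) v = Matrix.toEuclideanLin A (Matrix.toEuclideanLin B v) := by
  simp [Matrix.toEuclideanLin_apply, Matrix.mulVec_mulVec]

lemma toEuclideanLin_one_apply {d : ℕ} (v : EuclideanSpace ℝ (Fin d)) :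
    Matrix.toEuclideanLin (1 : Matrix (Fin d) (Fin d) ℝ) v = v := by
  simp [Matrix.toEuclideanLin_apply]

lemma flow_hasDerivAt {d : ℕ} (B : Matrix (Fin d) (Fin d) ℝ) (a : ℝ)
    (ξ : EuclideanSpace ℝ (Fin d)) (u : ℝ) :
    HasDerivAt (fun t => Matrix.toEuclideanLin (NormedSpace.exp ((t - a) • B)) ξ)
      (Matrix.toEuclideanLin B (Matrix.toEuclideanLin (NormedSpace.exp ((u - a) • B)) ξ)) u := by
  letI : SeminormedRing (Matrix (Fin d) (Fin d) ℝ) := Matrix.linftyOpSemiNormedRing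
  letI : NormedRing (Matrix (Fin d) (Fin d) ℝ) := Matrix.linftyOpNormedRing
  letI : NormedAlgebra ℝ (Matrix (Fin d) (Fin d) ℝ) := Matrix.linftyOpNormedAlgebra
  have h1 : HasDerivAt (fun t : ℝ => NormedSpace.exp (t • B))
      (B * NormedSpace.exp ((u - a) • B)) (u - a) :=
    hasDerivAt_exp_smul_const' (𝕂 := ℝ) B (u - a)
  have h2 : HasDerivAt (fun t : ℝ => t - a) 1 u := (hasDerivAt_id u).sub_const a
  have h3 : HasDerivAt (fun t : ℝ => NormedSpace.exp ((t - a) • B))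
      (B * NormedSpace.exp ((u - a) • B)) u := by
    have h := h1.scomp u h2
    rw [one_smul] at h
    exact h
  have F : Matrix (Fin d) (Fin d) ℝ →ₗ[ℝ] EuclideanSpace ℝ (Fin d) :=
    (LinearMap.applyₗ ξ).comp Matrix.toEuclideanLin.toLinearMap
  set Fc : Matrix (Fin d) (Fin d) ℝ →L[ℝ] EuclideanSpace ℝ (Fin d) :=
    LinearMap.toContinuousLinearMap
      ((LinearMap.applyₗ ξ).comp Matrix.toEuclideanLin.toLinearMap) with hFc
  have h4 : HasDerivAt (fun t : ℝ => Fc (NormedSpace.exp ((t - a) • B)))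
      (Fc (B * NormedSpace.exp ((u - a) • B))) u :=
    Fc.hasFDerivAt.comp_hasDerivAt u h3
  have hFcapp : ∀ M : Matrix (Fin d) (Fin d) ℝ, Fc M = Matrix.toEuclideanLin M ξ := by
    intro M; simp [hFc]
  simp only [hFcapp] at h4
  simpa [toEuclideanLin_mul_apply] using h4

lemma flow_eq {d : ℕ} (B : Matrix (Fin d) (Fin d) ℝ) {a b : ℝ} (hab : a < b)
    (x : ℝ → EuclideanSpace ℝ (Fin d)) (hc : ContinuousOn x (Set.Icc a b))
    (hd : ∀ t ∈ Set.Ico a b,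
      HasDerivWithinAt x (Matrix.toEuclideanLin B (x t)) (Set.Ico a b) t) :
    ∀ t ∈ Set.Icc a b,
      x t = Matrix.toEuclideanLin (NormedSpace.exp ((t - a) • B)) (x a) := by
  set L : EuclideanSpace ℝ (Fin d) →L[ℝ] EuclideanSpace ℝ (Fin d) :=
    LinearMap.toContinuousLinearMap (Matrix.toEuclideanLin B) with hL
  have hLapp : ∀ v, L v = Matrix.toEuclideanLin B v := fun v => rfl
  set g : ℝ → EuclideanSpace ℝ (Fin d) :=
    fun t => Matrix.toEuclideanLin (NormedSpace.exp ((t - a) • B)) (x a) with hg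
  have hgderiv : ∀ u : ℝ, HasDerivAt g (Matrix.toEuclideanLin B (g u)) u :=
    fun u => flow_hasDerivAt B a (x a) u
  have key : Set.EqOn x g (Set.Icc a b) := by
    apply ODE_solution_unique_of_mem_Icc_right
      (v := fun _ ξ => L ξ) (s := fun _ => Set.univ) (K := ‖L‖₊)
      (fun _ _ => L.lipschitz.lipschitzOnWith) hc ?_ (fun _ _ => trivial)
      (fun u _ => (hgderiv u).continuousAt.continuousWithinAt) ?_ (fun _ _ => trivial) ?_
    · intro t ht
      have hmem : Set.Ico a b ∈ nhdsWithin t (Set.Ici t) := by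
        rw [mem_nhdsWithin]
        exact ⟨Set.Iio b, isOpen_Iio, ht.2, fun u hu => ⟨le_trans ht.1 hu.2, hu.1⟩⟩
      exact ((hd t ht).mono_of_mem_nhdsWithin hmem)
    · intro t ht
      exact ((hgderiv t).hasDerivWithinAt)
    · simp [hg, toEuclideanLin_one_apply]
  intro t ht
  exact key ht

/-- The iterated multiple-Lyapunov-function bound: for every `M` and `t ∈ [τ_M, τ_{M+1})`,
`V_{s_M}(x(t)) ≤ V_{s_0}(x(0)) ⬝ (∏_{n<M} μ_{s_n s_{n+1}}) ⬝
exp(-λ_{s_M}(t - τ_M) - Σ_{n<M} λ_{s_n}(τ_{n+1} - τ_n))`. -/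
theorem stmt9 {d N : ℕ}
    (A : Fin N → Matrix (Fin d) (Fin d) ℝ)
    (P : Fin N → Matrix (Fin d) (Fin d) ℝ) (lam : Fin N → ℝ)
    (hP : ∀ i, (P i).PosDef)
    (hdecay : ∀ (i : Fin N) (ξ : EuclideanSpace ℝ (Fin d)) (t : ℝ), 0 ≤ t →
      quadForm (P i) (Matrix.toEuclideanLin (NormedSpace.exp (t • A i)) ξ) ≤
        Real.exp (-(lam i) * t) * quadForm (P i) ξ)
    (τ : ℕ → ℝ) (s : ℕ → Fin N)
    (hτ0 : τ 0 = 0) (hτmono : StrictMono τ)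
    (hτtop : Filter.Tendsto τ Filter.atTop Filter.atTop)
    (hs : ∀ n, s (n + 1) ≠ s n)
    (μ : Fin N → Fin N → ℝ)
    (hμpos : ∀ n : ℕ, 0 < μ (s n) (s (n + 1)))
    (hμ : ∀ n : ℕ, ∀ z : EuclideanSpace ℝ (Fin d),
      quadForm (P (s (n + 1))) z ≤ μ (s n) (s (n + 1)) * quadForm (P (s n)) z)
    (x : ℝ → EuclideanSpace ℝ (Fin d)) (hx : IsSwitchedSolution A τ s x) :
    ∀ M : ℕ, ∀ t ∈ Set.Ico (τ M) (τ (M + 1)),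
      quadForm (P (s M)) (x t) ≤
        quadForm (P (s 0)) (x 0) *
          (∏ n ∈ Finset.range M, μ (s n) (s (n + 1))) *
          Real.exp (-(lam (s M)) * (t - τ M) -
            ∑ n ∈ Finset.range M, lam (s n) * (τ (n + 1) - τ n)) := by
  have hτnn : ∀ n, 0 ≤ τ n := fun n => hτ0 ▸ hτmono.monotone (Nat.zero_le n)
  have flow : ∀ n : ℕ, ∀ t ∈ Set.Icc (τ n) (τ (n + 1)),
      x t = Matrix.toEuclideanLin (NormedSpace.exp ((t - τ n) • A (s n))) (x (τ n)) := by
    intro n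
    refine flow_eq (A (s n)) (hτmono (Nat.lt_succ_self n)) x
      (hx.1.mono fun u hu => le_trans (hτnn n) hu.1) (hx.2 n)
  have step : ∀ n : ℕ, ∀ t ∈ Set.Icc (τ n) (τ (n + 1)),
      quadForm (P (s n)) (x t) ≤
        Real.exp (-(lam (s n)) * (t - τ n)) * quadForm (P (s n)) (x (τ n)) := by
    intro n t ht
    rw [flow n t ht]
    exact hdecay (s n) (x (τ n)) (t - τ n) (sub_nonneg.2 ht.1)
  set V : ℕ → ℝ := fun n => quadForm (P (s n)) (x (τ n)) with hV
  have ind : ∀ M : ℕ, V M ≤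
      quadForm (P (s 0)) (x 0) * (∏ n ∈ Finset.range M, μ (s n) (s (n + 1))) *
        Real.exp (-(∑ n ∈ Finset.range M, lam (s n) * (τ (n + 1) - τ n))) := by
    intro M
    induction M with
    | zero => simp [hV, hτ0]
    | succ M ih =>
      have h1 : V (M + 1) ≤ μ (s M) (s (M + 1)) * quadForm (P (s M)) (x (τ (M + 1))) :=
        hμ M (x (τ (M + 1)))
      have h2 : quadForm (P (s M)) (x (τ (M + 1))) ≤
          Real.exp (-(lam (s M)) * (τ (M + 1) - τ M)) * V M :=
        step M (τ (M + 1)) ⟨(hτmono (Nat.lt_succ_self M)).le, le_rfl⟩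
      have hexp : (0:ℝ) < Real.exp (-(lam (s M)) * (τ (M + 1) - τ M)) := Real.exp_pos _
      have h3 : V (M + 1) ≤ μ (s M) (s (M + 1)) *
          (Real.exp (-(lam (s M)) * (τ (M + 1) - τ M)) * V M) :=
        h1.trans (mul_le_mul_of_nonneg_left h2 (hμpos M).le)
      have h4 : V M ≤ quadForm (P (s 0)) (x 0) *
          (∏ n ∈ Finset.range M, μ (s n) (s (n + 1))) *
          Real.exp (-(∑ n ∈ Finset.range M, lam (s n) * (τ (n + 1) - τ n))) := ih
      calc V (M + 1) ≤ μ (s M) (s (M + 1)) *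
            (Real.exp (-(lam (s M)) * (τ (M + 1) - τ M)) * V M) := h3
        _ ≤ μ (s M) (s (M + 1)) *
            (Real.exp (-(lam (s M)) * (τ (M + 1) - τ M)) *
              (quadForm (P (s 0)) (x 0) *
                (∏ n ∈ Finset.range M, μ (s n) (s (n + 1))) *
                Real.exp (-(∑ n ∈ Finset.range M, lam (s n) * (τ (n + 1) - τ n))))) := by
          exact mul_le_mul_of_nonneg_left
            (mul_le_mul_of_nonneg_left h4 hexp.le) (hμpos M).le
        _ = quadForm (P (s 0)) (x 0) *
            (∏ n ∈ Finset.range (M + 1), μ (s n) (s (n + 1))) *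
            Real.exp (-(∑ n ∈ Finset.range (M + 1), lam (s n) * (τ (n + 1) - τ n))) := by
          have hE : Real.exp (-(lam (s M) * (τ (M + 1) - τ M))) =
              Real.exp (-lam (s M) * (τ (M + 1) - τ M)) := by rw [neg_mul]
          have key : ∀ q p m e f : ℝ, m * (f * (q * p * e)) = q * (p * m) * (e * f) := by
            intros; ring
          rw [Finset.prod_range_succ, Finset.sum_range_succ, neg_add, Real.exp_add, hE]
          exact key _ _ _ _ _
  intro M t ht
  have h5 : quadForm (P (s M)) (x t) ≤
      Real.exp (-(lam (s M)) * (t - τ M)) * V M :=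
    step M t ⟨ht.1, ht.2.le⟩
  have h6 := mul_le_mul_of_nonneg_left (ind M) (Real.exp_pos (-(lam (s M)) * (t - τ M))).le
  calc quadForm (P (s M)) (x t) ≤ Real.exp (-(lam (s M)) * (t - τ M)) * V M := h5
    _ ≤ Real.exp (-(lam (s M)) * (t - τ M)) *
        (quadForm (P (s 0)) (x 0) * (∏ n ∈ Finset.range M, μ (s n) (s (n + 1))) *
          Real.exp (-(∑ n ∈ Finset.range M, lam (s n) * (τ (n + 1) - τ n)))) := h6
    _ = quadForm (P (s 0)) (x 0) *
        (∏ n ∈ Finset.range M, μ (s n) (s (n + 1))) *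
        Real.exp (-(lam (s M)) * (t - τ M) -
          ∑ n ∈ Finset.range M, lam (s n) * (τ (n + 1) - τ n)) := by
      rw [Real.exp_sub]
      rw [Real.exp_neg (∑ n ∈ Finset.range M, lam (s n) * (τ (n + 1) - τ n))]
      ring
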